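/- Let X be a compact Hausdorff space, let F : ℝ × X → X be a continuous flow, and let x ∈ X be an aperiodic point, i.e. F(t,x) ≠ x for all t ≠ 0. Then there exists a Borel probability measure χ on X such that: (i) for every s ≥ 0 the pushforward of χ under F(s,·) dominates e^{−s}·χ, i.e. (F(s,·))_*χ ≥ e^{−s}·χ as measures; and (ii) for every s > 0 the total variation distance satisfies ‖χ − (F(s,·))_*χ‖ = 2 − 2e^{−s}; in particular ‖χ − (F(s,·))_*χ‖ → 2 as s → ∞. -/

import Mathlib

open MeasureTheory Filter
open scoped ENNReal

/-- Total variation distance of two (finite) measures: `|μ − ν|(X)`, rendered via the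
Jordan decomposition as `(μ − ν)(X) + (ν − μ)(X)` with truncated subtraction of measures. -/
noncomputable def tvDist {X : Type*} [MeasurableSpace X] (μ ν : Measure X) : ℝ≥0∞ :=
  (μ - ν) Set.univ + (ν - μ) Set.univ


lemma my_sub_lemma1 {X : Type*} [MeasurableSpace X] (μ κ : Measure X) [IsFiniteMeasure μ]
    (c : ℝ≥0∞) (hc : c ≤ 1) (A : Set X) (hA : MeasurableSet A)
    (hμA : μ Aᶜ = 0) (hκA : κ A = 0) :
    μ - (c • μ + κ) = (1 - c) • μ := by
  rw [Measure.sub_def]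
  apply le_antisymm
  · apply sInf_le
    have h : (1 - c) • μ + (c • μ + κ) = μ + κ := by
      rw [← add_assoc, ← add_smul, tsub_add_cancel_of_le hc, one_smul]
    simp only [Set.mem_setOf_eq, h]
    exact Measure.le_add_right le_rfl
  · apply le_sInf
    intro d hd
    rw [Measure.le_iff]
    intro S hS
    have hSA : MeasurableSet (S ∩ A) := hS.inter hA
    have hμS : μ S = μ (S ∩ A) := by
      have h1 : μ (S ∩ A) + μ (S \ A) = μ S := measure_inter_add_diff S hA
      have h2 : μ (S \ A) = 0 :=
        le_antisymm (le_trans (measure_mono (Set.diff_subset_compl S A)) hμA.le) zero_le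
      rw [← h1, h2, add_zero]
    have hκSA : κ (S ∩ A) = 0 :=
      le_antisymm (le_trans (measure_mono Set.inter_subset_right) hκA.le) zero_le
    have hd' : μ (S ∩ A) ≤ d (S ∩ A) + c * μ (S ∩ A) := by
      have := hd (S ∩ A)
      simp only [Measure.add_apply, Measure.smul_apply, smul_eq_mul, hκSA, add_zero] at this
      exact this
    have hfin : μ (S ∩ A) ≠ ∞ := measure_ne_top μ _
    have key : (1 - c) * μ (S ∩ A) ≤ d (S ∩ A) := by
      rw [ENNReal.sub_mul (fun _ _ => hfin), one_mul]
      exact tsub_le_iff_right.mpr hd'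
    calc ((1 - c) • μ) S = (1 - c) * μ (S ∩ A) := by
          rw [Measure.smul_apply, smul_eq_mul, hμS]
      _ ≤ d (S ∩ A) := key
      _ ≤ d S := measure_mono Set.inter_subset_left

lemma my_sub_lemma2 {X : Type*} [MeasurableSpace X] (μ κ : Measure X)
    (c : ℝ≥0∞) (hc : c ≤ 1) (B : Set X) (hB : MeasurableSet B)
    (hμB : μ B = 0) (hκB : κ Bᶜ = 0) :
    (c • μ + κ) - μ = κ := by
  rw [Measure.sub_def]
  apply le_antisymm
  · apply sInf_le
    simp only [Set.mem_setOf_eq]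
    intro S
    simp only [Measure.add_apply, Measure.smul_apply, smul_eq_mul]
    have : c * μ S ≤ μ S := by
      calc c * μ S ≤ 1 * μ S := mul_le_mul_left hc _
        _ = μ S := one_mul _
    calc c * μ S + κ S ≤ μ S + κ S := add_le_add_left this _
      _ = κ S + μ S := add_comm _ _
  · apply le_sInf
    intro d hd
    rw [Measure.le_iff]
    intro S hS
    have hSB : MeasurableSet (S ∩ B) := hS.inter hB
    have hκS : κ S = κ (S ∩ B) := by
      have h1 : κ (S ∩ B) + κ (S \ B) = κ S := measure_inter_add_diff S hB
      have h2 : κ (S \ B) = 0 :=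
        le_antisymm (le_trans (measure_mono (Set.diff_subset_compl S B)) hκB.le) zero_le
      rw [← h1, h2, add_zero]
    have hμSB : μ (S ∩ B) = 0 :=
      le_antisymm (le_trans (measure_mono Set.inter_subset_right) hμB.le) zero_le
    have hd' : c * μ (S ∩ B) + κ (S ∩ B) ≤ d (S ∩ B) + μ (S ∩ B) := hd (S ∩ B)
    rw [hμSB, mul_zero, zero_add, add_zero] at hd'
    calc κ S = κ (S ∩ B) := hκS
      _ ≤ d (S ∩ B) := hd'
      _ ≤ d S := measure_mono Set.inter_subset_left


lemma my_map_shift (s : ℝ) :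
    ((volume.restrict (Set.Iic (0:ℝ))).withDensity (fun t => ENNReal.ofReal (Real.exp t))).map
        (fun t => s + t)
      = (volume.restrict (Set.Iic s)).withDensity (fun t => ENNReal.ofReal (Real.exp (t - s))) := by
  have hf : Measurable (fun t : ℝ => ENNReal.ofReal (Real.exp t)) :=
    ENNReal.measurable_ofReal.comp Real.measurable_exp
  have hg : Measurable (fun t : ℝ => ENNReal.ofReal (Real.exp (t - s))) :=
    ENNReal.measurable_ofReal.comp (Real.measurable_exp.comp (measurable_id.sub_const s))
  ext S hS
  rw [Measure.map_apply (measurable_const_add s) hS,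
    withDensity_apply _ (hS.preimage (measurable_const_add s)),
    withDensity_apply _ hS,
    Measure.restrict_restrict (hS.preimage (measurable_const_add s)),
    Measure.restrict_restrict hS,
    ← lintegral_indicator ((hS.preimage (measurable_const_add s)).inter measurableSet_Iic) _,
    ← lintegral_indicator (hS.inter measurableSet_Iic) _]
  have key := (measurePreserving_add_left (volume : Measure ℝ) s).lintegral_comp
    (f := Set.indicator (S ∩ Set.Iic s) (fun t => ENNReal.ofReal (Real.exp (t - s))))
    (hg.indicator (hS.inter measurableSet_Iic))
  rw [← key]
  apply lintegral_congr
  intro t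
  by_cases h : t ∈ (fun t => s + t) ⁻¹' S ∩ Set.Iic (0:ℝ)
  · have h' : s + t ∈ S ∩ Set.Iic s := by
      refine ⟨h.1, ?_⟩
      have := h.2
      simp only [Set.mem_Iic] at this ⊢
      linarith
    rw [Set.indicator_of_mem h, Set.indicator_of_mem h']
    congr 1
    ring_nf
  · have h' : s + t ∉ S ∩ Set.Iic s := by
      intro hc
      apply h
      refine ⟨hc.1, ?_⟩
      have := hc.2
      simp only [Set.mem_Iic] at this ⊢
      linarith
    rw [Set.indicator_of_notMem h, Set.indicator_of_notMem h']

/-- If `x` is an aperiodic point of a continuous flow on a compact Hausdorff space, then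
there is a Borel probability measure `χ` such that (i) `(F_s)_*χ ≥ e^{−s}·χ` for all `s ≥ 0`,
and (ii) `‖χ − (F_s)_*χ‖ = 2 − 2e^{−s}` for all `s > 0`; in particular the total variation
distance tends to `2` as `s → ∞`. -/
theorem stmt9 {X : Type*} [TopologicalSpace X] [CompactSpace X] [T2Space X]
    [MeasurableSpace X] [BorelSpace X]
    (F : ℝ × X → X) (hF : Continuous F)
    (h0 : ∀ x, F (0, x) = x)
    (hadd : ∀ s t x, F (s + t, x) = F (s, F (t, x)))
    (x : X) (hx : ∀ t : ℝ, t ≠ 0 → F (t, x) ≠ x) :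
    ∃ χ : Measure X, IsProbabilityMeasure χ ∧
      (∀ s : ℝ, 0 ≤ s →
        ENNReal.ofReal (Real.exp (-s)) • χ ≤ χ.map (fun y => F (s, y))) ∧
      (∀ s : ℝ, 0 < s →
        tvDist χ (χ.map (fun y => F (s, y))) = ENNReal.ofReal (2 - 2 * Real.exp (-s))) ∧
      Tendsto (fun s : ℝ => tvDist χ (χ.map (fun y => F (s, y)))) atTop (nhds 2) := by
  classical
  set φ : ℝ → X := fun t => F (t, x) with hφdef
  have hφc : Continuous φ := hF.comp (continuous_id.prodMk continuous_const)
  have hφm : Measurable φ := hφc.measurable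
  have hinj : Function.Injective φ := by
    intro a b hab
    by_contra hne
    apply hx (a - b) (sub_ne_zero.mpr hne)
    have hab' : F (a, x) = F (b, x) := hab
    have h1 : F (-b + a, x) = F (-b, F (a, x)) := hadd (-b) a x
    have h2 : F (-b + b, x) = F (-b, F (b, x)) := hadd (-b) b x
    rw [neg_add_cancel, h0] at h2
    rw [show a - b = -b + a by ring, h1, hab', ← h2]
  have hf : Measurable (fun t : ℝ => ENNReal.ofReal (Real.exp t)) :=
    ENNReal.measurable_ofReal.comp Real.measurable_exp
  set ρ : Measure ℝ :=
    (volume.restrict (Set.Iic (0:ℝ))).withDensity (fun t => ENNReal.ofReal (Real.exp t)) with hρdef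
  set χ : Measure X := ρ.map φ with hχdef
  -- χ is a probability measure
  have hρuniv : ρ Set.univ = 1 := by
    rw [hρdef, withDensity_apply _ MeasurableSet.univ, Measure.restrict_univ]
    rw [← ofReal_integral_eq_lintegral_ofReal (integrableOn_exp_Iic 0)
      (Filter.Eventually.of_forall fun t => (Real.exp_pos t).le)]
    rw [integral_exp_Iic_zero, ENNReal.ofReal_one]
  have hχprob : IsProbabilityMeasure χ := by
    constructor
    rw [hχdef, Measure.map_apply hφm MeasurableSet.univ, Set.preimage_univ, hρuniv]
  -- decomposition of the pushforward
  have hφs : ∀ s : ℝ, Measurable (fun y => F (s, y)) :=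
    fun s => (hF.comp (continuous_const.prodMk continuous_id)).measurable
  have hdecomp : ∀ s : ℝ, 0 ≤ s →
      χ.map (fun y => F (s, y)) = ENNReal.ofReal (Real.exp (-s)) • χ +
        (((volume.restrict (Set.Ioc (0:ℝ) s)).withDensity
          (fun t => ENNReal.ofReal (Real.exp (t - s)))).map φ) := by
    intro s hs
    have hg : Measurable (fun t : ℝ => ENNReal.ofReal (Real.exp (t - s))) :=
      ENNReal.measurable_ofReal.comp (Real.measurable_exp.comp (measurable_id.sub_const s))
    have h1 : χ.map (fun y => F (s, y)) = (ρ.map (fun t => s + t)).map φ := by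
      rw [hχdef, Measure.map_map (hφs s) hφm, Measure.map_map hφm (measurable_const_add s)]
      congr 1
      funext t
      exact (hadd s t x).symm
    rw [h1, my_map_shift s]
    have hsplit : (volume : Measure ℝ).restrict (Set.Iic s)
        = volume.restrict (Set.Iic 0) + volume.restrict (Set.Ioc 0 s) := by
      rw [← Measure.restrict_union (Set.Iic_disjoint_Ioc le_rfl) measurableSet_Ioc,
        Set.Iic_union_Ioc_eq_Iic hs]
    rw [hsplit, withDensity_add_measure, Measure.map_add _ _ hφm]
    congr 1
    have heq : (volume.restrict (Set.Iic (0:ℝ))).withDensity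
        (fun t => ENNReal.ofReal (Real.exp (t - s)))
        = ENNReal.ofReal (Real.exp (-s)) • ρ := by
      rw [hρdef, ← withDensity_smul _ hf]
      congr 1
      funext t
      rw [Pi.smul_apply, smul_eq_mul, ← ENNReal.ofReal_mul (Real.exp_pos (-s)).le,
        ← Real.exp_add]
      ring_nf
    rw [heq, Measure.map_smul]
  -- part (i)
  have hpart1 : ∀ s : ℝ, 0 ≤ s →
      ENNReal.ofReal (Real.exp (-s)) • χ ≤ χ.map (fun y => F (s, y)) := by
    intro s hs
    rw [hdecomp s hs]
    exact Measure.le_add_right le_rfl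
  -- part (ii)
  have hc_le : ∀ s : ℝ, 0 ≤ s → ENNReal.ofReal (Real.exp (-s)) ≤ 1 := by
    intro s hs
    rw [← ENNReal.ofReal_one]
    exact ENNReal.ofReal_le_ofReal (Real.exp_le_one_iff.mpr (neg_nonpos.mpr hs))
  have hpart2 : ∀ s : ℝ, 0 < s →
      tvDist χ (χ.map (fun y => F (s, y))) = ENNReal.ofReal (2 - 2 * Real.exp (-s)) := by
    intro s hs
    set c : ℝ≥0∞ := ENNReal.ofReal (Real.exp (-s)) with hcdef
    set κ : Measure X := ((volume.restrict (Set.Ioc (0:ℝ) s)).withDensity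
      (fun t => ENNReal.ofReal (Real.exp (t - s)))).map φ with hκdef
    have hg : Measurable (fun t : ℝ => ENNReal.ofReal (Real.exp (t - s))) :=
      ENNReal.measurable_ofReal.comp (Real.measurable_exp.comp (measurable_id.sub_const s))
    have hdec := hdecomp s hs.le
    -- the supporting sets
    set A : Set X := ⋃ n : ℕ, φ '' Set.Icc (-(n:ℝ)) 0 with hAdef
    have hAmeas : MeasurableSet A := by
      apply MeasurableSet.iUnion
      intro n
      exact ((isCompact_Icc.image hφc).isClosed).measurableSet
    have hAorbit : ∀ t : ℝ, t ≤ 0 → φ t ∈ A := by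
      intro t ht
      refine Set.mem_iUnion.mpr ⟨⌈-t⌉₊, Set.mem_image_of_mem φ ⟨?_, ht⟩⟩
      have := Nat.le_ceil (-t)
      linarith
    set B : Set X := φ '' Set.Icc 0 s \ {x} with hBdef
    have hBmeas : MeasurableSet B :=
      ((isCompact_Icc.image hφc).isClosed).measurableSet.diff (measurableSet_singleton x)
    -- null conditions
    have hχA : χ Aᶜ = 0 := by
      rw [hχdef, Measure.map_apply hφm hAmeas.compl, hρdef,
        withDensity_apply _ (hAmeas.compl.preimage hφm),
        Measure.restrict_restrict (hAmeas.compl.preimage hφm)]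
      have : φ ⁻¹' Aᶜ ∩ Set.Iic 0 = ∅ := by
        ext t
        simp only [Set.mem_inter_iff, Set.mem_preimage, Set.mem_compl_iff, Set.mem_Iic,
          Set.mem_empty_iff_false, iff_false, not_and]
        intro hna ht
        exact hna (hAorbit t ht)
      rw [this]
      simp
    have hκA : κ A = 0 := by
      rw [hκdef, Measure.map_apply hφm hAmeas,
        withDensity_apply _ (hAmeas.preimage hφm),
        Measure.restrict_restrict (hAmeas.preimage hφm)]
      have : φ ⁻¹' A ∩ Set.Ioc 0 s = ∅ := by
        ext t
        simp only [Set.mem_inter_iff, Set.mem_preimage, Set.mem_Ioc,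
          Set.mem_empty_iff_false, iff_false, not_and]
        intro hma ht
        exfalso
        obtain ⟨n, u, hu, huv⟩ := Set.mem_iUnion.mp hma
        have heq : u = t := hinj huv
        have hu2 : u ≤ 0 := hu.2
        linarith
      rw [this]
      simp
    have hχB : χ B = 0 := by
      rw [hχdef, Measure.map_apply hφm hBmeas, hρdef,
        withDensity_apply _ (hBmeas.preimage hφm),
        Measure.restrict_restrict (hBmeas.preimage hφm)]
      have : φ ⁻¹' B ∩ Set.Iic 0 = ∅ := by
        ext t
        simp only [Set.mem_inter_iff, Set.mem_preimage, Set.mem_Iic,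
          Set.mem_empty_iff_false, iff_false, not_and]
        intro hmb ht
        exfalso
        rw [hBdef] at hmb
        obtain ⟨⟨u, hu, huv⟩, hnx⟩ := hmb
        have : u = t := hinj huv
        subst this
        have : u = 0 := le_antisymm ht hu.1
        subst this
        exact hnx (by simpa [hφdef] using h0 x)
      rw [this]
      simp
    have hκB : κ Bᶜ = 0 := by
      rw [hκdef, Measure.map_apply hφm hBmeas.compl,
        withDensity_apply _ (hBmeas.compl.preimage hφm),
        Measure.restrict_restrict (hBmeas.compl.preimage hφm)]
      have : φ ⁻¹' Bᶜ ∩ Set.Ioc 0 s = ∅ := by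
        ext t
        simp only [Set.mem_inter_iff, Set.mem_preimage, Set.mem_compl_iff, Set.mem_Ioc,
          Set.mem_empty_iff_false, iff_false, not_and]
        intro hnb ht hts
        apply hnb
        refine ⟨Set.mem_image_of_mem φ ⟨ht.le, hts⟩, ?_⟩
        simp only [Set.mem_singleton_iff]
        exact hx t (ne_of_gt ht)
      rw [this]
      simp
    -- masses
    have hχuniv : χ Set.univ = 1 := hχprob.measure_univ
    have hκuniv : κ Set.univ = 1 - c := by
      have hmap : (χ.map (fun y => F (s, y))) Set.univ = 1 := by
        rw [Measure.map_apply (hφs s) MeasurableSet.univ, Set.preimage_univ, hχuniv]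
      rw [hdec] at hmap
      simp only [Measure.add_apply, Measure.smul_apply, smul_eq_mul, hχuniv, mul_one] at hmap
      have hcne : c ≠ ∞ := ENNReal.ofReal_ne_top
      exact ENNReal.eq_sub_of_add_eq hcne (by rw [add_comm]; exact hmap)
    -- compute tvDist
    have h1 : χ - χ.map (fun y => F (s, y)) = (1 - c) • χ := by
      rw [hdec]
      exact my_sub_lemma1 χ κ c (hc_le s hs.le) A hAmeas hχA hκA
    have h2 : χ.map (fun y => F (s, y)) - χ = κ := by
      rw [hdec]
      exact my_sub_lemma2 χ κ c (hc_le s hs.le) B hBmeas hχB hκB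
    rw [tvDist, h1, h2, Measure.smul_apply, smul_eq_mul, hχuniv, mul_one, hκuniv]
    have hle1 : Real.exp (-s) ≤ 1 := Real.exp_le_one_iff.mpr (neg_nonpos.mpr hs.le)
    rw [hcdef, ← ENNReal.ofReal_one, ← ENNReal.ofReal_sub _ (Real.exp_pos (-s)).le,
      ← ENNReal.ofReal_add (by linarith) (by linarith)]
    congr 1
    ring
  -- tendsto
  have hpart3 : Tendsto (fun s : ℝ => tvDist χ (χ.map (fun y => F (s, y)))) atTop (nhds 2) := by
    have h1 : Tendsto (fun s : ℝ => 2 - 2 * Real.exp (-s)) atTop (nhds 2) := by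
      have := Real.tendsto_exp_neg_atTop_nhds_zero
      have h2 := this.const_mul 2
      have h3 := (tendsto_const_nhds (x := (2:ℝ))).sub h2
      simpa using h3
    have h2 : Tendsto (fun s : ℝ => ENNReal.ofReal (2 - 2 * Real.exp (-s))) atTop (nhds 2) := by
      have := (ENNReal.continuous_ofReal.tendsto 2).comp h1
      simpa [ENNReal.ofReal_ofNat, Function.comp_def] using this
    apply h2.congr'
    filter_upwards [eventually_gt_atTop 0] with s hs
    exact (hpart2 s hs).symm
  exact ⟨χ, hχprob, hpart1, hpart2, hpart3⟩
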